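/- Let x̄ ∈ ℝ^d with x̄ ≠ 0, f(w) = −⟨w, x̄⟩ + 2‖x̄‖·max(‖w‖ − 1, 0), and w* = x̄/‖x̄‖. Then for every w with ‖w‖ < 3: f(w) − f(w*) ≥ (‖x̄‖/2)·‖w − w*‖². -/

import Mathlib

/-- Quadratic growth of `f(w) = −⟨w, x̄⟩ + 2‖x̄‖·max(‖w‖ − 1, 0)` near its
minimizer `w* = x̄/‖x̄‖`, for `‖w‖ < 3`. -/
theorem lb_quadratic_growth {d : ℕ} (xb : EuclideanSpace ℝ (Fin d)) (hx : xb ≠ 0)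
    (f : EuclideanSpace ℝ (Fin d) → ℝ)
    (hf : f = fun w => - (inner ℝ w xb : ℝ) + 2 * ‖xb‖ * max (‖w‖ - 1) 0)
    (wstar : EuclideanSpace ℝ (Fin d)) (hws : wstar = ‖xb‖⁻¹ • xb) :
    ∀ w, ‖w‖ < 3 → (‖xb‖ / 2) * ‖w - wstar‖ ^ 2 ≤ f w - f wstar := by
  intro w hw
  have hxn : (0:ℝ) < ‖xb‖ := norm_pos_iff.mpr hx
  have hws1 : ‖wstar‖ = 1 := by
    rw [hws, norm_smul, norm_inv, norm_norm, inv_mul_cancel₀ hxn.ne']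
  have hxbs : xb = ‖xb‖ • wstar := by
    rw [hws, smul_smul, mul_inv_cancel₀ hxn.ne', one_smul]
  have hinner : ∀ v : EuclideanSpace ℝ (Fin d),
      (inner ℝ v xb : ℝ) = ‖xb‖ * inner ℝ v wstar := by
    intro v
    conv_lhs => rw [hxbs]
    rw [real_inner_smul_right]
  have hss : (inner ℝ wstar wstar : ℝ) = 1 := by
    rw [real_inner_self_eq_norm_sq, hws1]; norm_num
  have hexp : ‖w - wstar‖ ^ 2 = ‖w‖ ^ 2 - 2 * inner ℝ w wstar + 1 := by
    rw [norm_sub_sq_real, hws1]; ring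
  have ht : (inner ℝ w wstar : ℝ) ≤ ‖w‖ * ‖wstar‖ := real_inner_le_norm w wstar
  rw [hws1, mul_one] at ht
  have hnw : (0:ℝ) ≤ ‖w‖ := norm_nonneg w
  simp only [hf, hexp, hinner, hss, hws1]
  rw [sub_self, max_self]
  rcases le_or_gt (‖w‖ - 1) 0 with h | h
  · rw [max_eq_right h]
    nlinarith [mul_nonneg hxn.le (show (0:ℝ) ≤ 1 - ‖w‖ ^ 2 by nlinarith),
      mul_nonneg hxn.le (sub_nonneg.mpr ht)]
  · rw [max_eq_left h.le]
    nlinarith [mul_nonneg hxn.le (show (0:ℝ) ≤ (‖w‖ - 1) * (3 - ‖w‖) by nlinarith),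
      mul_nonneg hxn.le (sub_nonneg.mpr ht)]
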